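/- For a discrete memoryless channel with finite input alphabet X, finite output alphabet Y, and transition matrix W with all entries positive, the function J(R) := max over λ ∈ [0,1], x₁,x₂ ∈ X, P₁,P₂ probability distributions on X subject to λ·I(P₁,W) + (1−λ)·I(P₂,W) ≥ R, of λ·D(Q₁‖W_{x₁}) + (1−λ)·D(Q₂‖W_{x₂}) (where Q_i(y) = Σ_x P_i(x)W(y|x) and W_x is the row of W at x) is a concave, non-increasing function of R on (−∞, C], where C is the channel capacity. -/

import Mathlib

open scoped BigOperators

noncomputable section

/-- A probability distribution on a finite set, given as a nonnegative function summing to one. -/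
def IsDist {X : Type*} [Fintype X] (p : X → ℝ) : Prop :=
  (∀ x, 0 ≤ p x) ∧ ∑ x, p x = 1

/-- Kullback–Leibler divergence between two distributions on a finite set. -/
def klDiv {Y : Type*} [Fintype Y] (p q : Y → ℝ) : ℝ :=
  ∑ y, p y * Real.log (p y / q y)

/-- Output distribution induced by input distribution `P` over the channel `W`. -/
def outDist {X Y : Type*} [Fintype X] (W : X → Y → ℝ) (P : X → ℝ) (y : Y) : ℝ :=
  ∑ x, P x * W x y

/-- Mutual information `I(P, W)` of input distribution `P` over channel `W`. -/
def mutInfo {X Y : Type*} [Fintype X] [Fintype Y] (W : X → Y → ℝ) (P : X → ℝ) : ℝ :=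
  ∑ x, P x * klDiv (W x) (outDist W P)

/-- Channel capacity `C = max_P I(P, W)`. -/
def capacity {X Y : Type*} [Fintype X] [Fintype Y] (W : X → Y → ℝ) : ℝ :=
  sSup { c | ∃ P : X → ℝ, IsDist P ∧ c = mutInfo W P }

/-- The two-phase exponent function `J(R)`: the supremum over time-sharing constants
`λ ∈ [0,1]`, input letters `x₁, x₂` and input distributions `P₁, P₂` with
`λ I(P₁,W) + (1-λ) I(P₂,W) ≥ R` of `λ D(Q₁‖W_{x₁}) + (1-λ) D(Q₂‖W_{x₂})`. -/
def Jfun {X Y : Type*} [Fintype X] [Fintype Y] (W : X → Y → ℝ) (R : ℝ) : ℝ :=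
  sSup { v | ∃ (lam : ℝ) (x₁ x₂ : X) (P₁ P₂ : X → ℝ),
      0 ≤ lam ∧ lam ≤ 1 ∧ IsDist P₁ ∧ IsDist P₂ ∧
      R ≤ lam * mutInfo W P₁ + (1 - lam) * mutInfo W P₂ ∧
      v = lam * klDiv (outDist W P₁) (W x₁) + (1 - lam) * klDiv (outDist W P₂) (W x₂) }

/-! ### Auxiliary material for the proof -/

set_option linter.unusedSectionVars false
set_option linter.unusedVariables false

/-- The defining set of `Jfun`. -/
def auxJSet {X Y : Type*} [Fintype X] [Fintype Y] (W : X → Y → ℝ) (R : ℝ) : Set ℝ :=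
  { v | ∃ (lam : ℝ) (x₁ x₂ : X) (P₁ P₂ : X → ℝ),
      0 ≤ lam ∧ lam ≤ 1 ∧ IsDist P₁ ∧ IsDist P₂ ∧
      R ≤ lam * mutInfo W P₁ + (1 - lam) * mutInfo W P₂ ∧
      v = lam * klDiv (outDist W P₁) (W x₁) + (1 - lam) * klDiv (outDist W P₂) (W x₂) }

lemma aux_Jfun_eq {X Y : Type*} [Fintype X] [Fintype Y] (W : X → Y → ℝ) (R : ℝ) :
    Jfun W R = sSup (auxJSet W R) := rfl

section Aux
variable {X Y : Type*} [Fintype X] [Fintype Y] [Nonempty X] [Nonempty Y]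

lemma aux_isDist_outDist (W : X → Y → ℝ)
    (hpos : ∀ x y, 0 < W x y) (hrow : ∀ x, ∑ y, W x y = 1)
    {P : X → ℝ} (hP : IsDist P) : IsDist (outDist W P) := by
  constructor
  · intro y; exact Finset.sum_nonneg fun x _ => mul_nonneg (hP.1 x) (hpos x y).le
  · calc ∑ y, outDist W P y = ∑ x, ∑ y, P x * W x y := Finset.sum_comm
    _ = ∑ x, P x * ∑ y, W x y := by simp [Finset.mul_sum]
    _ = 1 := by simp only [hrow, mul_one]; exact hP.2

lemma aux_klDiv_le {m : ℝ} (hm : 0 < m) {p q : Y → ℝ}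
    (hp : IsDist p) (hq : ∀ y, m ≤ q y) : klDiv p q ≤ -Real.log m := by
  have hp1 : ∀ y, p y ≤ 1 := fun y => by
    calc p y ≤ ∑ y', p y' := Finset.single_le_sum (fun i _ => hp.1 i) (Finset.mem_univ y)
    _ = 1 := hp.2
  calc klDiv p q = ∑ y, p y * Real.log (p y / q y) := rfl
  _ ≤ ∑ y, p y * (-Real.log m) := by
      refine Finset.sum_le_sum fun y _ => ?_
      rcases eq_or_lt_of_le (hp.1 y) with h | h
      · simp [← h]
      · refine mul_le_mul_of_nonneg_left ?_ (hp.1 y)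
        have h1 : p y / q y ≤ 1 / m := div_le_div₀ zero_le_one (hp1 y) hm (hq y)
        have h2 : Real.log (p y / q y) ≤ Real.log (1 / m) :=
          Real.log_le_log (div_pos h (lt_of_lt_of_le hm (hq y))) h1
        rwa [one_div, Real.log_inv] at h2
  _ = -Real.log m := by rw [← Finset.sum_mul, hp.2, one_mul]

lemma aux_capacity_eq (W : X → Y → ℝ)
    (hpos : ∀ x y, 0 < W x y) (hrow : ∀ x, ∑ y, W x y = 1) :
    ∃ P0 : X → ℝ, IsDist P0 ∧ capacity W = mutInfo W P0 := by
  have hne' : (Finset.univ : Finset (X × Y)).Nonempty := Finset.univ_nonempty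
  set m := Finset.univ.inf' hne' (fun p : X × Y => W p.1 p.2) with hm
  have hm0 : 0 < m := (Finset.lt_inf'_iff hne').mpr fun p _ => hpos p.1 p.2
  have hmle : ∀ x y, m ≤ W x y := fun x y => Finset.inf'_le _ (Finset.mem_univ (x, y))
  have hout : ∀ (P : X → ℝ), P ∈ stdSimplex ℝ X → ∀ y, (0:ℝ) < outDist W P y := by
    intro P hP y
    have hmo : m ≤ outDist W P y := by
      calc m = ∑ x, P x * m := by rw [← Finset.sum_mul, hP.2, one_mul]
      _ ≤ ∑ x, P x * W x y := Finset.sum_le_sum fun x _ =>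
          mul_le_mul_of_nonneg_left (hmle x y) (hP.1 x)
      _ = outDist W P y := rfl
    linarith
  have hcont : ContinuousOn (fun P : X → ℝ => mutInfo W P) (stdSimplex ℝ X) := by
    simp only [mutInfo, klDiv]
    refine continuousOn_finset_sum _ fun x _ => ContinuousOn.mul (continuous_apply x).continuousOn ?_
    refine continuousOn_finset_sum _ fun y _ => ContinuousOn.mul continuousOn_const ?_
    refine ContinuousOn.log ?_ ?_
    · refine ContinuousOn.div continuousOn_const ?_ ?_
      · simp only [outDist]
        exact continuousOn_finset_sum _ fun x' _ =>
          ContinuousOn.mul (continuous_apply x').continuousOn continuousOn_const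
      · intro P hP; exact (hout P hP y).ne'
    · intro P hP
      exact div_ne_zero (hpos x y).ne' (hout P hP y).ne'
  have hsne : (stdSimplex ℝ X).Nonempty :=
    ⟨fun _ => (Fintype.card X : ℝ)⁻¹, fun _ => by positivity, by
      rw [Finset.sum_const, Finset.card_univ, nsmul_eq_mul,
        mul_inv_cancel₀ (Nat.cast_ne_zero.mpr Fintype.card_ne_zero)]⟩
  obtain ⟨P0, hP0mem, hP0max⟩ := (isCompact_stdSimplex ℝ X).exists_isMaxOn hsne hcont
  refine ⟨P0, ⟨hP0mem.1, hP0mem.2⟩, ?_⟩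
  apply IsGreatest.csSup_eq
  refine ⟨⟨P0, ⟨hP0mem.1, hP0mem.2⟩, rfl⟩, ?_⟩
  rintro c ⟨P, hP, rfl⟩
  exact hP0max (show P ∈ stdSimplex ℝ X from ⟨hP.1, hP.2⟩)

lemma aux_bddAbove (W : X → Y → ℝ)
    (hpos : ∀ x y, 0 < W x y) (hrow : ∀ x, ∑ y, W x y = 1) (R : ℝ) :
    BddAbove (auxJSet W R) := by
  have hne' : (Finset.univ : Finset (X × Y)).Nonempty := Finset.univ_nonempty
  set m := Finset.univ.inf' hne' (fun p : X × Y => W p.1 p.2) with hm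
  have hm0 : 0 < m := (Finset.lt_inf'_iff hne').mpr fun p _ => hpos p.1 p.2
  have hmle : ∀ x y, m ≤ W x y := fun x y => Finset.inf'_le _ (Finset.mem_univ (x, y))
  refine ⟨-Real.log m, ?_⟩
  rintro v ⟨lam, x1, x2, P1, P2, h0, h1, hd1, hd2, hcon, rfl⟩
  have hD1 : klDiv (outDist W P1) (W x1) ≤ -Real.log m :=
    aux_klDiv_le hm0 (aux_isDist_outDist W hpos hrow hd1) (hmle x1)
  have hD2 : klDiv (outDist W P2) (W x2) ≤ -Real.log m :=
    aux_klDiv_le hm0 (aux_isDist_outDist W hpos hrow hd2) (hmle x2)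
  nlinarith [mul_le_mul_of_nonneg_left hD1 h0,
    mul_le_mul_of_nonneg_left hD2 (by linarith : (0:ℝ) ≤ 1 - lam)]

lemma aux_JSet_nonempty (W : X → Y → ℝ)
    (hpos : ∀ x y, 0 < W x y) (hrow : ∀ x, ∑ y, W x y = 1)
    {R : ℝ} (hR : R ≤ capacity W) : (auxJSet W R).Nonempty := by
  obtain ⟨P0, hP0, hC⟩ := aux_capacity_eq W hpos hrow
  have x0 : X := Classical.arbitrary X
  exact ⟨_, 1, x0, x0, P0, P0, zero_le_one, le_rfl, hP0, hP0,
    by rw [hC] at hR; linarith, rfl⟩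

lemma aux_le_Jfun (W : X → Y → ℝ)
    (hpos : ∀ x y, 0 < W x y) (hrow : ∀ x, ∑ y, W x y = 1)
    {R lam : ℝ} (x₁ x₂ : X) {P₁ P₂ : X → ℝ}
    (h0 : 0 ≤ lam) (h1 : lam ≤ 1) (hd1 : IsDist P₁) (hd2 : IsDist P₂)
    (hcon : R ≤ lam * mutInfo W P₁ + (1 - lam) * mutInfo W P₂) :
    lam * klDiv (outDist W P₁) (W x₁) + (1 - lam) * klDiv (outDist W P₂) (W x₂) ≤ Jfun W R := by
  rw [aux_Jfun_eq]
  exact le_csSup (aux_bddAbove W hpos hrow R) ⟨lam, x₁, x₂, P₁, P₂, h0, h1, hd1, hd2, hcon, rfl⟩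

lemma aux_Jfun_le (W : X → Y → ℝ)
    (hpos : ∀ x y, 0 < W x y) (hrow : ∀ x, ∑ y, W x y = 1)
    {R c : ℝ} (hR : R ≤ capacity W) (h : ∀ v ∈ auxJSet W R, v ≤ c) : Jfun W R ≤ c := by
  rw [aux_Jfun_eq]
  exact csSup_le (aux_JSet_nonempty W hpos hrow hR) h

end Aux

lemma aux_pair {R ri rj vi vj V : ℝ} (hj : rj < R) (hi : R < ri)
    (hle : (R - rj) / (ri - rj) * vi + (1 - (R - rj) / (ri - rj)) * vj ≤ V) :
    (ri - R) * (vj - V) ≤ (rj - R) * (vi - V) := by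
  have hdd : 0 < ri - rj := by linarith
  have h2 := mul_le_mul_of_nonneg_right hle hdd.le
  have he : ((R - rj) / (ri - rj) * vi + (1 - (R - rj) / (ri - rj)) * vj) * (ri - rj)
      = (R - rj) * vi + (ri - R) * vj := by field_simp; ring
  rw [he] at h2
  nlinarith [h2]

lemma aux_key {n : ℕ} (r v w : Fin n → ℝ) (R V : ℝ)
    (hw : ∀ i, 0 ≤ w i) (hw1 : ∑ i, w i = 1)
    (h1 : ∀ i, R ≤ r i → v i ≤ V)
    (h2 : ∀ i j, R < r i → r j < R → (r i - R) * (v j - V) ≤ (r j - R) * (v i - V))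
    (hr : R ≤ ∑ i, w i * r i) : ∑ i, w i * v i ≤ V := by
  by_cases hex : ∃ i, R < r i
  · obtain ⟨i0, hi0⟩ := hex
    obtain ⟨h, hh, hmax⟩ := Finset.exists_max_image
      (Finset.univ.filter fun i => R < r i) (fun i => (v i - V) / (r i - R))
      ⟨i0, by simp [hi0]⟩
    have hrh : R < r h := by simpa using hh
    have hd : 0 < r h - R := by linarith
    set s : ℝ := (v h - V) / (r h - R) with hs
    have hvh : v h ≤ V := h1 h hrh.le
    have hs0 : s ≤ 0 := div_nonpos_iff.mpr (Or.inr ⟨by linarith, hd.le⟩)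
    have hkey : ∀ i, v i - V ≤ s * (r i - R) := by
      intro i
      rcases lt_trichotomy (r i) R with hlt | heq | hgt
      · have hij := h2 h i hrh hlt
        rw [hs, div_mul_eq_mul_div, le_div_iff₀ hd]
        nlinarith
      · have := h1 i heq.ge
        rw [heq]; simp; linarith
      · have hle : (v i - V) / (r i - R) ≤ s := hmax i (by simp [hgt])
        have hdi : 0 < r i - R := by linarith
        rw [div_le_iff₀ hdi] at hle
        linarith [hle]
    have e1 : ∑ i, w i * (v i - V) ≤ ∑ i, w i * (s * (r i - R)) :=
      Finset.sum_le_sum fun i _ => mul_le_mul_of_nonneg_left (hkey i) (hw i)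
    have e2 : ∑ i, w i * (v i - V) = (∑ i, w i * v i) - V := by
      rw [show (fun i => w i * (v i - V)) = fun i => w i * v i - V * w i from
        funext fun i => by ring]
      rw [Finset.sum_sub_distrib, ← Finset.mul_sum, hw1, mul_one]
    have e3 : ∑ i, w i * (s * (r i - R)) = s * ((∑ i, w i * r i) - R) := by
      rw [show (fun i => w i * (s * (r i - R))) = fun i => s * (w i * r i) - (s * R) * w i from
        funext fun i => by ring]
      rw [Finset.sum_sub_distrib, ← Finset.mul_sum, ← Finset.mul_sum, hw1]
      ring
    have e4 : s * ((∑ i, w i * r i) - R) ≤ 0 :=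
      mul_nonpos_of_nonpos_of_nonneg hs0 (by linarith)
    linarith [e1, e2.symm.trans_le (e1.trans_eq e3)]
  · push_neg at hex
    have hble : ∀ j, w j * r j ≤ w j * R := fun j =>
      mul_le_mul_of_nonneg_left (hex j) (hw j)
    have hsum : ∑ j, w j * r j ≤ R := by
      calc ∑ j, w j * r j ≤ ∑ j, w j * R := Finset.sum_le_sum fun j _ => hble j
      _ = R := by rw [← Finset.sum_mul, hw1, one_mul]
    have heq : ∑ j, w j * (R - r j) = 0 := by
      rw [show (fun j => w j * (R - r j)) = fun j => R * w j - w j * r j from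
        funext fun j => by ring]
      rw [Finset.sum_sub_distrib, ← Finset.mul_sum, hw1]
      linarith
    have hz : ∀ j ∈ Finset.univ, w j * (R - r j) = 0 := by
      rw [← Finset.sum_eq_zero_iff_of_nonneg]
      · exact heq
      · intro j _; exact mul_nonneg (hw j) (by linarith [hex j])
    have hterm : ∀ j, w j * v j ≤ w j * V := by
      intro j
      rcases eq_or_lt_of_le (hw j) with h0 | h0
      · rw [← h0]; simp
      · have hzz := hz j (Finset.mem_univ j)
        have hrj : r j = R := by
          rcases mul_eq_zero.mp hzz with h | h
          · exact absurd h.symm h0.ne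
          · linarith
        exact mul_le_mul_of_nonneg_left (h1 j hrj.ge) (hw j)
    calc ∑ j, w j * v j ≤ ∑ j, w j * V := Finset.sum_le_sum fun j _ => hterm j
    _ = V := by rw [← Finset.sum_mul, hw1, one_mul]

/-- `J(R)` is concave and non-increasing on `(-∞, C]`. -/
theorem Jfun_concaveOn_antitoneOn {X Y : Type*} [Fintype X] [Fintype Y]
    [Nonempty X] [Nonempty Y]
    (W : X → Y → ℝ) (hpos : ∀ x y, 0 < W x y) (hrow : ∀ x, ∑ y, W x y = 1) :
    ConcaveOn ℝ (Set.Iic (capacity W)) (Jfun W) ∧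
    AntitoneOn (Jfun W) (Set.Iic (capacity W)) := by
  have hcore : ∀ R1 R2 a b : ℝ, 0 ≤ a → 0 ≤ b → a + b = 1 →
      ∀ v1 ∈ auxJSet W R1, ∀ v2 ∈ auxJSet W R2,
      a * v1 + b * v2 ≤ Jfun W (a * R1 + b * R2) := by
    rintro R1 R2 a b ha hb hab v1
      ⟨lam, x1, x2, P1, P2, hl0, hl1, hd1, hd2, hcon1, rfl⟩ v2
      ⟨mu, x3, x4, P3, P4, hn0, hn1, hd3, hd4, hcon2, rfl⟩
    have hPd : ∀ i : Fin 4, IsDist (![P1, P2, P3, P4] i) := by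
      intro i; fin_cases i
      · exact hd1
      · exact hd2
      · exact hd3
      · exact hd4
    have hkey := aux_key (n := 4)
      (fun i => mutInfo W (![P1, P2, P3, P4] i))
      (fun i => klDiv (outDist W (![P1, P2, P3, P4] i)) (W (![x1, x2, x3, x4] i)))
      ![a * lam, a * (1 - lam), b * mu, b * (1 - mu)]
      (a * R1 + b * R2) (Jfun W (a * R1 + b * R2))
      (by
        intro i; fin_cases i
        · exact mul_nonneg ha hl0
        · exact mul_nonneg ha (by linarith)
        · exact mul_nonneg hb hn0
        · exact mul_nonneg hb (by linarith))
      (by simp [Fin.sum_univ_four]; ring_nf; linarith)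
      (by
        intro i hi
        have hi' : a * R1 + b * R2 ≤ mutInfo W (![P1, P2, P3, P4] i) := hi
        have hle := aux_le_Jfun W hpos hrow (![x1, x2, x3, x4] i) (![x1, x2, x3, x4] i)
          zero_le_one le_rfl (hPd i) (hPd i)
          (by linarith : a * R1 + b * R2 ≤
            1 * mutInfo W (![P1, P2, P3, P4] i) + (1 - 1) * mutInfo W (![P1, P2, P3, P4] i))
        show klDiv (outDist W (![P1, P2, P3, P4] i)) (W (![x1, x2, x3, x4] i))
          ≤ Jfun W (a * R1 + b * R2)
        linarith)
      (by
        intro i j hi hj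
        have hi' : a * R1 + b * R2 < mutInfo W (![P1, P2, P3, P4] i) := hi
        have hj' : mutInfo W (![P1, P2, P3, P4] j) < a * R1 + b * R2 := hj
        have hne : mutInfo W (![P1, P2, P3, P4] i) - mutInfo W (![P1, P2, P3, P4] j) ≠ 0 := by
          linarith
        refine aux_pair hj' hi' (aux_le_Jfun W hpos hrow (![x1, x2, x3, x4] i)
          (![x1, x2, x3, x4] j)
          (div_nonneg (by linarith) (by linarith))
          ((div_le_one (by linarith)).mpr (by linarith))
          (hPd i) (hPd j) ?_)
        refine (show a * R1 + b * R2 =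
          (a * R1 + b * R2 - mutInfo W (![P1, P2, P3, P4] j)) /
            (mutInfo W (![P1, P2, P3, P4] i) - mutInfo W (![P1, P2, P3, P4] j)) *
            mutInfo W (![P1, P2, P3, P4] i) +
          (1 - (a * R1 + b * R2 - mutInfo W (![P1, P2, P3, P4] j)) /
            (mutInfo W (![P1, P2, P3, P4] i) - mutInfo W (![P1, P2, P3, P4] j))) *
            mutInfo W (![P1, P2, P3, P4] j) from ?_).le
        field_simp
        ring)
      (by
        simp [Fin.sum_univ_four]
        nlinarith [mul_le_mul_of_nonneg_left hcon1 ha, mul_le_mul_of_nonneg_left hcon2 hb])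
    have hsum : (∑ i : Fin 4, ![a * lam, a * (1 - lam), b * mu, b * (1 - mu)] i *
        klDiv (outDist W (![P1, P2, P3, P4] i)) (W (![x1, x2, x3, x4] i)))
        = a * (lam * klDiv (outDist W P1) (W x1) + (1 - lam) * klDiv (outDist W P2) (W x2))
        + b * (mu * klDiv (outDist W P3) (W x3) + (1 - mu) * klDiv (outDist W P4) (W x4)) := by
      simp [Fin.sum_univ_four]
      ring
    calc a * (lam * klDiv (outDist W P1) (W x1) + (1 - lam) * klDiv (outDist W P2) (W x2))
        + b * (mu * klDiv (outDist W P3) (W x3) + (1 - mu) * klDiv (outDist W P4) (W x4))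
        = ∑ i : Fin 4, ![a * lam, a * (1 - lam), b * mu, b * (1 - mu)] i *
          klDiv (outDist W (![P1, P2, P3, P4] i)) (W (![x1, x2, x3, x4] i)) := hsum.symm
    _ ≤ Jfun W (a * R1 + b * R2) := hkey
  constructor
  · refine ⟨convex_Iic _, ?_⟩
    intro R1 hR1 R2 hR2 a b ha hb hab
    simp only [smul_eq_mul]
    have hR1' : R1 ≤ capacity W := hR1
    have hR2' : R2 ≤ capacity W := hR2
    rcases eq_or_lt_of_le ha with rfl | ha'
    · have hb1 : b = 1 := by linarith
      subst hb1
      norm_num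
    rcases eq_or_lt_of_le hb with rfl | hb'
    · have ha1 : a = 1 := by linarith
      subst ha1
      norm_num
    have h1' : Jfun W R1 ≤ (Jfun W (a * R1 + b * R2) - b * Jfun W R2) / a := by
      refine aux_Jfun_le W hpos hrow hR1' fun v1 hv1 => ?_
      rw [le_div_iff₀ ha']
      have h2' : Jfun W R2 ≤ (Jfun W (a * R1 + b * R2) - v1 * a) / b := by
        refine aux_Jfun_le W hpos hrow hR2' fun v2 hv2 => ?_
        rw [le_div_iff₀ hb']
        have := hcore R1 R2 a b ha hb hab v1 hv1 v2 hv2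
        linarith
      rw [le_div_iff₀ hb'] at h2'
      linarith
    rw [le_div_iff₀ ha'] at h1'
    linarith
  · intro R1 hR1 R2 hR2 h12
    rw [aux_Jfun_eq, aux_Jfun_eq]
    refine csSup_le_csSup (aux_bddAbove W hpos hrow R1) (aux_JSet_nonempty W hpos hrow hR2) ?_
    rintro v ⟨lam, x1, x2, P1, P2, h0, h1, hd1, hd2, hcon, hveq⟩
    exact ⟨lam, x1, x2, P1, P2, h0, h1, hd1, hd2, le_trans h12 hcon, hveq⟩

end
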